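/- For every ρ > 0, one has (1-ρ²)(2Φ(ρ)-1) - 2ρφ(ρ) < 0. -/

import Mathlib

open MeasureTheory Real Set Filter

/-- The standard normal density `φ(x) = (2π)^(-1/2) exp(-x²/2)`. -/
noncomputable def stdNormalPDF (x : ℝ) : ℝ :=
  (Real.sqrt (2 * Real.pi))⁻¹ * Real.exp (-x ^ 2 / 2)

/-- The standard normal CDF `Φ(x) = ∫_{-∞}^x φ(t) dt`. -/
noncomputable def stdNormalCDF (x : ℝ) : ℝ :=
  ∫ t in Set.Iic x, stdNormalPDF t

/-- The symmetric doubly truncated normal (SDTN) density with location `μ`, scale `η`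
and truncation parameter `ρ`. -/
noncomputable def sdtnPDF (μ η ρ : ℝ) (x : ℝ) : ℝ :=
  if x ∈ Set.Icc (μ - ρ * η) (μ + ρ * η) then
    stdNormalPDF ((x - μ) / η) / (η * (2 * stdNormalCDF ρ - 1))
  else 0

lemma stdNormalPDF_eq (x : ℝ) :
    stdNormalPDF x = (Real.sqrt (2 * Real.pi))⁻¹ * Real.exp (-(1/2) * x ^ 2) := by
  unfold stdNormalPDF; ring_nf

lemma stdNormalPDF_pos (x : ℝ) : 0 < stdNormalPDF x := by
  unfold stdNormalPDF
  positivity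

lemma stdNormalPDF_continuous : Continuous stdNormalPDF := by
  unfold stdNormalPDF
  fun_prop

lemma stdNormalPDF_integrable : Integrable stdNormalPDF := by
  have h := (integrable_exp_neg_mul_sq (b := 1/2) (by norm_num)).const_mul
    (Real.sqrt (2 * Real.pi))⁻¹
  have he : stdNormalPDF = fun x => (Real.sqrt (2 * Real.pi))⁻¹ * Real.exp (-(1/2) * x ^ 2) :=
    funext stdNormalPDF_eq
  rw [he]
  exact h

lemma integral_stdNormalPDF : ∫ x, stdNormalPDF x = 1 := by
  have h := integral_gaussian (1/2 : ℝ)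
  have h2 : ∫ x, stdNormalPDF x
      = (Real.sqrt (2 * Real.pi))⁻¹ * ∫ x, Real.exp (-(1/2) * x ^ 2) := by
    rw [← integral_const_mul]
    simp_rw [stdNormalPDF_eq]
  rw [h2, h]
  have : (π / (1/2) : ℝ) = 2 * π := by ring
  rw [this, inv_mul_cancel₀]
  positivity

lemma stdNormalCDF_zero : stdNormalCDF 0 = 1/2 := by
  have hInt := stdNormalPDF_integrable
  have hsymm : (∫ x in Iic (0:ℝ), stdNormalPDF x) = ∫ x in Ioi (0:ℝ), stdNormalPDF x := by
    have := integral_comp_neg_Iic (0:ℝ) stdNormalPDF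
    simp only [neg_zero] at this
    rw [← this]
    refine setIntegral_congr_fun measurableSet_Iic fun x _ => ?_
    simp [stdNormalPDF, neg_sq]
  have hsplit : (∫ x in Iic (0:ℝ), stdNormalPDF x) + ∫ x in Ioi (0:ℝ), stdNormalPDF x
      = ∫ x, stdNormalPDF x :=
    intervalIntegral.integral_Iic_add_Ioi hInt.integrableOn hInt.integrableOn
  rw [integral_stdNormalPDF, ← hsymm] at hsplit
  unfold stdNormalCDF
  linarith

lemma stdNormalCDF_sub (ρ : ℝ) :
    stdNormalCDF ρ - stdNormalCDF 0 = ∫ t in (0:ℝ)..ρ, stdNormalPDF t := by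
  exact intervalIntegral.integral_Iic_sub_Iic stdNormalPDF_integrable.integrableOn
    stdNormalPDF_integrable.integrableOn

lemma hasDerivAt_mul_pdf (t : ℝ) :
    HasDerivAt (fun x => x * stdNormalPDF x) ((1 - t ^ 2) * stdNormalPDF t) t := by
  have hexp : HasDerivAt (fun x : ℝ => Real.exp (-x ^ 2 / 2))
      (-t * Real.exp (-t ^ 2 / 2)) t := by
    have h1 : HasDerivAt (fun x : ℝ => -x ^ 2 / 2) (-t) t := by
      have := ((hasDerivAt_pow 2 t).neg).div_const 2
      simpa using this.congr_deriv (by push_cast; ring)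
    simpa [mul_comm] using h1.exp
  have hp : HasDerivAt stdNormalPDF (-t * stdNormalPDF t) t := by
    have := hexp.const_mul (Real.sqrt (2 * Real.pi))⁻¹
    unfold stdNormalPDF
    refine this.congr_deriv ?_
    ring
  have := (hasDerivAt_id t).mul hp
  refine this.congr_deriv ?_
  simp only [id_eq]
  ring

lemma integral_key (ρ : ℝ) :
    ∫ t in (0:ℝ)..ρ, (1 - t ^ 2) * stdNormalPDF t = ρ * stdNormalPDF ρ := by
  have h := intervalIntegral.integral_eq_sub_of_hasDerivAt
    (f := fun x => x * stdNormalPDF x) (f' := fun t => (1 - t ^ 2) * stdNormalPDF t)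
    (a := 0) (b := ρ) (fun t _ => hasDerivAt_mul_pdf t)
    (((continuous_const.sub (continuous_pow 2)).mul stdNormalPDF_continuous).intervalIntegrable 0 ρ)
  simpa using h

theorem sdtn_t_neg (ρ : ℝ) (hρ : 0 < ρ) :
    (1 - ρ ^ 2) * (2 * stdNormalCDF ρ - 1) - 2 * ρ * stdNormalPDF ρ < 0 := by
  have hcdf : 2 * stdNormalCDF ρ - 1 = 2 * ∫ t in (0:ℝ)..ρ, stdNormalPDF t := by
    have := stdNormalCDF_sub ρ
    rw [stdNormalCDF_zero] at this
    linarith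
  have hlt : (∫ t in (0:ℝ)..ρ, (1 - ρ ^ 2) * stdNormalPDF t)
      < ∫ t in (0:ℝ)..ρ, (1 - t ^ 2) * stdNormalPDF t := by
    apply intervalIntegral.integral_lt_integral_of_continuousOn_of_le_of_exists_lt hρ
    · exact (continuous_const.mul stdNormalPDF_continuous).continuousOn
    · exact ((continuous_const.sub (continuous_pow 2)).mul
        stdNormalPDF_continuous).continuousOn
    · intro x hx
      have hx2 : x ^ 2 ≤ ρ ^ 2 := by
        have h0 : 0 < x := hx.1
        nlinarith [hx.2]
      nlinarith [stdNormalPDF_pos x]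
    · refine ⟨ρ/2, ⟨by linarith, by linarith⟩, ?_⟩
      have hx2 : (ρ/2) ^ 2 < ρ ^ 2 := by nlinarith
      nlinarith [stdNormalPDF_pos (ρ/2)]
  rw [intervalIntegral.integral_const_mul] at hlt
  rw [integral_key] at hlt
  rw [hcdf]
  nlinarith
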